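/- Euler field in conjugate coordinates: let d₁ ≠ 0 and d₂,…,d_r ∈ ℝ with d_r = 1 and d_i + d_{r-i+1} = d₁ + 1 for all i. On {t ∈ ℝʳ : t¹ > 0} define s¹ = -t¹, sⁱ = tⁱ (t¹)^{(d₁-2dᵢ)/d₁} for 1 < i < r, and sʳ = ½ Σᵢ tⁱ t^{r-i+1} (t¹)^{-2/d₁ - 1}. Let E = Σᵢ dᵢ tⁱ ∂_{tⁱ}. Then E(s¹) = d₁ s¹, E(sʲ) = (d₁ - dⱼ) sʲ = -d̃ⱼ sʲ for 1 < j < r, and E(sʳ) = -sʳ, where d̃₁ = -d₁, d̃ⱼ = dⱼ - d₁, d̃_r = 1. In other words, the pushforward of E is -Σⱼ d̃ⱼ sʲ ∂_{sʲ}. -/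

import Mathlib

open scoped BigOperators

/-- Partial derivative `∂ₖ g` at `t`. -/
noncomputable def pd {r : ℕ} (k : Fin r) (g : (Fin r → ℝ) → ℝ) (t : Fin r → ℝ) : ℝ :=
  fderiv ℝ g t (Pi.single k 1)

/-- The conjugate flat coordinates (0-based indices, dimension `r + 2 ≥ 2`):
`s¹ = -t¹`, `sⁱ = tⁱ (t¹)^((d₁-2dᵢ)/d₁)` for middle indices, and
`sʳ = ½ ∑ᵢ tⁱ t^{r-i+1} (t¹)^(-2/d₁ - 1)`. -/
noncomputable def sCoord (r : ℕ) (ds : Fin (r + 2) → ℝ) (j : Fin (r + 2))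
    (t : Fin (r + 2) → ℝ) : ℝ :=
  if j = 0 then -t 0
  else if j = Fin.last (r + 1) then
    (1 / 2) * ∑ i, t i * t i.rev * t 0 ^ (-2 / ds 0 - 1)
  else t j * t 0 ^ ((ds 0 - 2 * ds j) / ds 0)

/-- Projection onto the `i`-th coordinate as a continuous linear map. -/
noncomputable def pj {n : ℕ} (i : Fin n) : (Fin n → ℝ) →L[ℝ] ℝ :=
  ContinuousLinearMap.proj i

lemma hasF_proj {n : ℕ} (i : Fin n) (t : Fin n → ℝ) :
    HasFDerivAt (fun t : Fin n → ℝ => t i) (pj i) t :=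
  (pj i).hasFDerivAt

lemma hasF_rpow {n : ℕ} (a : ℝ) (i0 : Fin n) (t : Fin n → ℝ) (ht : t i0 ≠ 0) :
    HasFDerivAt (fun t : Fin n → ℝ => t i0 ^ a)
      ((a * t i0 ^ (a - 1)) • pj i0) t :=
  by
  have := (Real.hasDerivAt_rpow_const (p := a) (Or.inl ht)).comp_hasFDerivAt t (hasF_proj i0 t)
  exact this

lemma pj_single {n : ℕ} (i k : Fin n) :
    pj i (Pi.single k (1:ℝ)) = if i = k then 1 else 0 := by
  simp [pj, Pi.single_apply]

lemma pd_neg0 {n : ℕ} (i0 : Fin n) (k : Fin n) (t : Fin n → ℝ) :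
    pd k (fun t => -t i0) t = -(if i0 = k then 1 else 0) := by
  have h : HasFDerivAt (fun t : Fin n → ℝ => -t i0) (-pj i0) t := (hasF_proj i0 t).neg
  rw [pd, h.fderiv]
  simp [pj_single]

lemma pd_mid {n : ℕ} (a : ℝ) (j : Fin n) (i0 : Fin n) (k : Fin n) (t : Fin n → ℝ)
    (ht : t i0 ≠ 0) :
    pd k (fun t => t j * t i0 ^ a) t
      = t j * (a * t i0 ^ (a - 1)) * (if i0 = k then 1 else 0)
        + t i0 ^ a * (if j = k then 1 else 0) := by
  have h : HasFDerivAt (fun t : Fin n → ℝ => t j * t i0 ^ a)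
      (t j • (a * t i0 ^ (a - 1)) • pj i0 + t i0 ^ a • pj j) t :=
    (hasF_proj j t).mul (hasF_rpow a i0 t ht)
  rw [pd, h.fderiv]
  simp [pj_single, mul_assoc]

lemma pd_last {n : ℕ} (b : ℝ) (i0 : Fin n) (k : Fin n) (t : Fin n → ℝ)
    (ht : t i0 ≠ 0) :
    pd k (fun t => (1/2 : ℝ) * ∑ i, t i * t i.rev * t i0 ^ b) t
      = (1/2) * ∑ i, ((t i * t i.rev) * (b * t i0 ^ (b - 1)) * (if i0 = k then 1 else 0)
          + t i0 ^ b * (t i * (if i.rev = k then 1 else 0)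
              + t i.rev * (if i = k then 1 else 0))) := by
  have h : ∀ i : Fin n, HasFDerivAt (fun t : Fin n → ℝ => t i * t i.rev * t i0 ^ b)
      ((t i * t i.rev) • ((b * t i0 ^ (b - 1)) • pj i0)
        + (t i0 ^ b) • (t i • pj i.rev + t i.rev • pj i)) t :=
    fun i => ((hasF_proj i t).mul (hasF_proj i.rev t)).mul (hasF_rpow b i0 t ht)
  have hsum := (HasFDerivAt.sum (fun i (_ : i ∈ Finset.univ) => h i)).const_mul (1/2 : ℝ)
  have e : (fun t : Fin n → ℝ => (1/2 : ℝ) * ∑ i, t i * t i.rev * t i0 ^ b)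
      = fun y => 1 / 2 * (∑ i, fun t : Fin n → ℝ => t i * t i.rev * t i0 ^ b) y := by
    funext y; simp [Finset.sum_apply]
  rw [pd, e, hsum.fderiv]
  simp [pj_single, mul_assoc, mul_add]

/-- Euler field in conjugate coordinates: with `d₁ ≠ 0`, `d_r = 1`,
`dᵢ + d_{r-i+1} = d₁ + 1`, and `E = ∑ dᵢ tⁱ ∂ᵢ`, one has `E(s¹) = d₁ s¹`,
`E(sʲ) = (d₁ - dⱼ) sʲ` for middle `j`, and `E(sʳ) = -sʳ`;
i.e. the pushforward of `E` is `-∑ d̃ⱼ sʲ ∂_{sʲ}`. -/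
theorem euler_field_in_conjugate_coordinates (r : ℕ) (ds : Fin (r + 2) → ℝ)
    (h0 : ds 0 ≠ 0) (hlast : ds (Fin.last (r + 1)) = 1)
    (hpair : ∀ i, ds i + ds i.rev = ds 0 + 1)
    (t : Fin (r + 2) → ℝ) (ht : 0 < t 0) :
    (∑ i, ds i * t i * pd i (sCoord r ds 0) t) = ds 0 * sCoord r ds 0 t ∧
    (∀ j, j ≠ 0 → j ≠ Fin.last (r + 1) →
      (∑ i, ds i * t i * pd i (sCoord r ds j) t) = (ds 0 - ds j) * sCoord r ds j t ∧
      (ds 0 - ds j) * sCoord r ds j t = -((ds j - ds 0) * sCoord r ds j t)) ∧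
    (∑ i, ds i * t i * pd i (sCoord r ds (Fin.last (r + 1))) t)
      = -sCoord r ds (Fin.last (r + 1)) t := by
  have hne : t 0 ≠ 0 := ht.ne'
  have hl0 : (Fin.last (r + 1)) ≠ (0 : Fin (r + 2)) := by
    simp [Fin.ext_iff]
  refine ⟨?_, ?_, ?_⟩
  · -- j = 0
    have hs : sCoord r ds 0 = fun t : Fin (r + 2) → ℝ => -t 0 := by
      funext u; simp [sCoord]
    rw [hs]
    simp only [pd_neg0]
    simp [sCoord]
  · -- middle j
    intro j hj0 hjl
    have hs : sCoord r ds j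
        = fun t : Fin (r + 2) → ℝ => t j * t 0 ^ ((ds 0 - 2 * ds j) / ds 0) := by
      funext u; simp [sCoord, hj0, hjl]
    constructor
    · rw [hs]
      simp only [pd_mid ((ds 0 - 2 * ds j) / ds 0) j 0 _ t hne]
      simp only [mul_add, mul_ite, mul_one, mul_zero, Finset.sum_add_distrib,
        Finset.sum_ite_eq, Finset.mem_univ, if_true]
      have hpow : t 0 ^ ((ds 0 - 2 * ds j) / ds 0 - 1)
          = t 0 ^ ((ds 0 - 2 * ds j) / ds 0) / t 0 := by
        rw [Real.rpow_sub ht, Real.rpow_one]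
      rw [hpow]
      field_simp
      ring
    · rw [hs]; ring
  · -- last j
    have hs : sCoord r ds (Fin.last (r + 1))
        = fun t : Fin (r + 2) → ℝ =>
            (1/2 : ℝ) * ∑ i, t i * t i.rev * t 0 ^ (-2 / ds 0 - 1) := by
      funext u; simp [sCoord, hl0]
    rw [hs]
    simp only [pd_last (-2 / ds 0 - 1) 0 _ t hne]
    have step : ∀ k : Fin (r + 2),
        ds k * t k * ((1/2) * ∑ i,
          ((t i * t i.rev) * ((-2 / ds 0 - 1) * t 0 ^ ((-2 / ds 0 - 1) - 1)) * (if 0 = k then 1 else 0)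
            + t 0 ^ (-2 / ds 0 - 1) * (t i * (if i.rev = k then 1 else 0)
                + t i.rev * (if i = k then 1 else 0))))
        = ∑ i, (1/2 : ℝ) * (ds k * t k *
            ((t i * t i.rev) * ((-2 / ds 0 - 1) * t 0 ^ ((-2 / ds 0 - 1) - 1)) * (if 0 = k then 1 else 0)
              + t 0 ^ (-2 / ds 0 - 1) * (t i * (if i.rev = k then 1 else 0)
                + t i.rev * (if i = k then 1 else 0)))) := by
      intro k
      rw [Finset.mul_sum, Finset.mul_sum]
      refine Finset.sum_congr rfl fun i _ => by ring
    rw [Finset.sum_congr rfl fun k _ => step k, Finset.sum_comm]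
    have inner : ∀ i : Fin (r + 2),
        (∑ k, (1/2 : ℝ) * (ds k * t k *
            ((t i * t i.rev) * ((-2 / ds 0 - 1) * t 0 ^ ((-2 / ds 0 - 1) - 1)) * (if 0 = k then 1 else 0)
              + t 0 ^ (-2 / ds 0 - 1) * (t i * (if i.rev = k then 1 else 0)
                + t i.rev * (if i = k then 1 else 0)))))
        = -((1/2 : ℝ) * (t i * t i.rev * t 0 ^ (-2 / ds 0 - 1))) := by
      intro i
      simp only [mul_add, mul_ite, mul_one, mul_zero, Finset.mul_sum, Finset.sum_add_distrib,
        Finset.sum_ite_eq, Finset.mem_univ, if_true]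
      have hpow : t 0 ^ ((-2 / ds 0 - 1) - 1) = t 0 ^ (-2 / ds 0 - 1) / t 0 := by
        rw [Real.rpow_sub ht, Real.rpow_one]
      rw [hpow]
      have hp := hpair i
      generalize t 0 ^ (-2 / ds 0 - 1) = P
      field_simp
      linear_combination (t i * t i.rev * P) * hp
    rw [Finset.sum_congr rfl fun i _ => inner i]
    rw [Finset.sum_neg_distrib, ← Finset.mul_sum]
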